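/- arXiv:1906.05855 — 3 statements merged into one kernel-verified Lean document; each statement's English description precedes it below -/
import Mathlib

section
/- For every 𝐱 ∈ ℝ³ the partial derivative ∂_t Δ_λ(t,𝐱) at t = 0 exists and equals (2π)^{−3} ∫_{ℝ³} e^{−λ²(2|𝐩|²+m²)} cos(𝐩·𝐱) d𝐩 = (2π)^{−3} (√(π/2)/λ)³ e^{−|𝐱|²/(8λ²)} e^{−λ²m²} = 2√(2π) λ e^{−λ²m²} G_{2λ}(0,𝐱). -/
open Real MeasureTheory
open scoped RealInnerProductSpace

noncomputable section

/-- ω(p) = √(|p|² + m²) -/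
def freqOmega (m : ℝ) (p : EuclideanSpace ℝ (Fin 3)) : ℝ := Real.sqrt (‖p‖ ^ 2 + m ^ 2)

/-- The modified commutator function Δ_λ(t,x). -/
def DeltaLam (m lam : ℝ) (t : ℝ) (x : EuclideanSpace ℝ (Fin 3)) : ℝ :=
  ((2 * π) ^ 3)⁻¹ * ∫ p : EuclideanSpace ℝ (Fin 3),
    (freqOmega m p)⁻¹ * Real.exp (-lam ^ 2 * (2 * ‖p‖ ^ 2 + m ^ 2)) *
      Real.sin (freqOmega m p * t - ⟪p, x⟫)

/-- The Gaussian G_μ(t,𝐱) = e^{−(t²+|𝐱|²)/(2μ²)} / (√(2π) μ)⁴ on ℝ × ℝ³ ≅ ℝ⁴. -/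
def GaussG (mu : ℝ) (t : ℝ) (x : EuclideanSpace ℝ (Fin 3)) : ℝ :=
  Real.exp (-(t ^ 2 + ‖x‖ ^ 2) / (2 * mu ^ 2)) / (Real.sqrt (2 * π) * mu) ^ 4

end

section aux
variable (m lam : ℝ) (hm : 0 < m) (hlam : 0 < lam) (x : EuclideanSpace ℝ (Fin 3))

lemma gauss_int3' {b : ℝ} (hb : 0 < b) :
    Integrable (fun p : EuclideanSpace ℝ (Fin 3) => Real.exp (-b * ‖p‖ ^ 2)) := by
  have h := (GaussianFourier.integrable_cexp_neg_mul_sq_norm_add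
    (V := EuclideanSpace ℝ (Fin 3)) (b := (b : ℂ)) (by simpa using hb) 0 0).norm
  simpa [Complex.norm_exp, ← Complex.ofReal_pow] using h

lemma cos_int3' {a : ℝ} (ha : 0 < a) :
    ∫ p : EuclideanSpace ℝ (Fin 3), Real.exp (-a * ‖p‖ ^ 2) * Real.cos (⟪p, x⟫) =
      (π / a) ^ ((3 : ℝ) / 2) * Real.exp (-‖x‖ ^ 2 / (4 * a)) := by
  have hi := GaussianFourier.integrable_cexp_neg_mul_sq_norm_add
    (V := EuclideanSpace ℝ (Fin 3)) (b := (a : ℂ)) (by simpa using ha) Complex.I x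
  have h := GaussianFourier.integral_cexp_neg_mul_sq_norm_add
    (V := EuclideanSpace ℝ (Fin 3)) (b := (a : ℂ)) (by simpa using ha) Complex.I x
  have hre : (∫ v : EuclideanSpace ℝ (Fin 3),
      (Complex.exp (-(a:ℂ) * ‖v‖ ^ 2 + Complex.I * ⟪x, v⟫)).re) =
      (((π:ℂ) / a) ^ ((Module.finrank ℝ (EuclideanSpace ℝ (Fin 3)) : ℂ) / 2) *
        Complex.exp (Complex.I ^ 2 * (‖x‖:ℂ) ^ 2 / (4 * a))).re := by
    rw [← h]; exact integral_re hi
  convert hre using 2 with p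
  · simp [Complex.exp_re, ← Complex.ofReal_pow, PiLp.inner_apply, mul_comm]
  · rw [show ((Module.finrank ℝ (EuclideanSpace ℝ (Fin 3)) : ℂ) / 2) = (((3:ℝ)/2 : ℝ) : ℂ) by
      simp, ← Complex.ofReal_div, ← Complex.ofReal_cpow (by positivity)]
    rw [show (Complex.I ^ 2 * (‖x‖:ℂ) ^ 2 / (4 * (a:ℂ))) = ((-‖x‖^2/(4*a) : ℝ) : ℂ) by
      push_cast; rw [Complex.I_sq]; ring]
    rw [← Complex.ofReal_exp, ← Complex.ofReal_mul, Complex.ofReal_re]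

lemma egauss_int3' (hlam : 0 < lam) :
    Integrable (fun p : EuclideanSpace ℝ (Fin 3) =>
      Real.exp (-lam ^ 2 * (2 * ‖p‖ ^ 2 + m ^ 2))) := by
  have h := (gauss_int3' (show (0:ℝ) < 2 * lam ^ 2 by positivity)).const_mul
    (Real.exp (-lam ^ 2 * m ^ 2))
  convert h using 2 with p
  rw [← Real.exp_add]; congr 1; ring

include hm hlam in
lemma deriv_part' :
    HasDerivAt (fun t => DeltaLam m lam t x)
      (((2 * π) ^ 3)⁻¹ * ∫ p : EuclideanSpace ℝ (Fin 3),
        Real.exp (-lam ^ 2 * (2 * ‖p‖ ^ 2 + m ^ 2)) * Real.cos (⟪p, x⟫)) 0 := by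
  have hω : ∀ p : EuclideanSpace ℝ (Fin 3), 0 < freqOmega m p := fun p =>
    Real.sqrt_pos.2 (by positivity)
  have hωm : ∀ p : EuclideanSpace ℝ (Fin 3), m ≤ freqOmega m p := fun p => by
    calc m = Real.sqrt (m ^ 2) := (Real.sqrt_sq hm.le).symm
      _ ≤ Real.sqrt (‖p‖ ^ 2 + m ^ 2) :=
        Real.sqrt_le_sqrt (le_add_of_nonneg_left (sq_nonneg _))
  set E := fun p : EuclideanSpace ℝ (Fin 3) => Real.exp (-lam ^ 2 * (2 * ‖p‖ ^ 2 + m ^ 2)) with hE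
  set F := fun (t : ℝ) (p : EuclideanSpace ℝ (Fin 3)) =>
    (freqOmega m p)⁻¹ * E p * Real.sin (freqOmega m p * t - ⟪p, x⟫) with hF
  set F' := fun (t : ℝ) (p : EuclideanSpace ℝ (Fin 3)) =>
    E p * Real.cos (freqOmega m p * t - ⟪p, x⟫) with hF'
  have contω : Continuous (freqOmega m) := ((continuous_norm.pow 2).add continuous_const).sqrt
  have contI : Continuous (fun p : EuclideanSpace ℝ (Fin 3) => (⟪p, x⟫ : ℝ)) :=
    continuous_id.inner continuous_const
  have contE : Continuous E := by fun_prop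
  have hmeas : ∀ t : ℝ, AEStronglyMeasurable (F t) volume := fun t => by
    apply Continuous.aestronglyMeasurable
    exact ((contω.inv₀ (fun p => (hω p).ne')).mul contE).mul
      (Real.continuous_sin.comp ((contω.mul continuous_const).sub contI))
  have hEint := egauss_int3' m lam hlam
  have key := hasDerivAt_integral_of_dominated_loc_of_deriv_le (μ := volume)
    (F := F) (F' := F') (x₀ := (0:ℝ)) (s := Metric.ball 0 1) (bound := E) (Metric.ball_mem_nhds _ one_pos)
    (Filter.Eventually.of_forall hmeas)
    (by -- Integrable (F 0)
      apply (hEint.const_mul m⁻¹).mono' (hmeas 0)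
      filter_upwards with p
      rw [hF]
      have h1 : |(freqOmega m p)⁻¹| ≤ m⁻¹ := by
        rw [abs_of_pos (inv_pos.2 (hω p))]
        exact inv_anti₀ hm (hωm p)
      have h2 : |Real.sin (freqOmega m p * 0 - ⟪p, x⟫)| ≤ 1 :=
        abs_le.2 ⟨Real.neg_one_le_sin _, Real.sin_le_one _⟩
      calc ‖(freqOmega m p)⁻¹ * E p * Real.sin (freqOmega m p * 0 - ⟪p, x⟫)‖
          = |(freqOmega m p)⁻¹| * E p * |Real.sin (freqOmega m p * 0 - ⟪p, x⟫)| := by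
            rw [Real.norm_eq_abs, abs_mul, abs_mul, abs_of_pos (Real.exp_pos _)]
        _ ≤ m⁻¹ * E p * 1 := by
            apply mul_le_mul (mul_le_mul_of_nonneg_right h1 (Real.exp_pos _).le) h2
              (abs_nonneg _) (by positivity)
        _ = m⁻¹ * E p := mul_one _)
    (by -- AEStronglyMeasurable (F' 0)
      apply Continuous.aestronglyMeasurable
      exact contE.mul
        (Real.continuous_cos.comp ((contω.mul continuous_const).sub contI)))
    (by -- bound
      filter_upwards with p t _
      rw [hF', Real.norm_eq_abs, abs_mul, abs_of_pos (Real.exp_pos _)]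
      calc E p * |Real.cos (freqOmega m p * t - ⟪p, x⟫)| ≤ E p * 1 :=
            mul_le_mul_of_nonneg_left
              (abs_le.2 ⟨Real.neg_one_le_cos _, Real.cos_le_one _⟩) (Real.exp_pos _).le
        _ = E p := mul_one _)
    hEint
    (by -- differentiability
      filter_upwards with p t _
      have h1 : HasDerivAt (fun s => freqOmega m p * s - ⟪p, x⟫) (freqOmega m p * 1) t :=
        ((hasDerivAt_id t).const_mul (freqOmega m p)).sub_const _
      have h2 := (Real.hasDerivAt_sin (freqOmega m p * t - ⟪p, x⟫)).comp t h1
      have h3 := h2.const_mul ((freqOmega m p)⁻¹ * E p)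
      refine h3.congr_deriv (Eq.symm ?_)
      rw [hF']
      have hne := (hω p).ne'
      field_simp)
  have main : HasDerivAt (fun t => ((2 * π) ^ 3)⁻¹ * ∫ p, F t p)
      (((2 * π) ^ 3)⁻¹ * ∫ p, F' 0 p) 0 := key.2.const_mul _
  have hDL : (fun t => DeltaLam m lam t x) = fun t => ((2 * π) ^ 3)⁻¹ * ∫ p, F t p := rfl
  rw [hDL]
  convert main using 2
  congr 1
  funext p
  simp [hF', hE, Real.cos_neg, neg_mul]

include hm hlam in
lemma value_part' (D : ℝ)
    (hD : D = ((2 * π) ^ 3)⁻¹ * ∫ p : EuclideanSpace ℝ (Fin 3),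
      Real.exp (-lam ^ 2 * (2 * ‖p‖ ^ 2 + m ^ 2)) * Real.cos (⟪p, x⟫)) :
    D = ((2 * π) ^ 3)⁻¹ * (Real.sqrt (π / 2) / lam) ^ 3 *
        Real.exp (-‖x‖ ^ 2 / (8 * lam ^ 2)) * Real.exp (-lam ^ 2 * m ^ 2) := by
  have ha : (0:ℝ) < 2 * lam ^ 2 := by positivity
  have hsplit : ∀ p : EuclideanSpace ℝ (Fin 3),
      Real.exp (-lam ^ 2 * (2 * ‖p‖ ^ 2 + m ^ 2)) * Real.cos (⟪p, x⟫) =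
      Real.exp (-lam ^ 2 * m ^ 2) *
        (Real.exp (-(2 * lam ^ 2) * ‖p‖ ^ 2) * Real.cos (⟪p, x⟫)) := fun p => by
    rw [← mul_assoc, ← Real.exp_add]; congr 2; ring
  rw [hD]
  simp_rw [hsplit]
  rw [integral_const_mul, cos_int3' x ha]
  have hpow : (π / (2 * lam ^ 2)) ^ ((3:ℝ)/2) = (Real.sqrt (π / 2) / lam) ^ 3 := by
    have hc : (0:ℝ) ≤ Real.sqrt (π / 2) / lam := by positivity
    rw [show π / (2 * lam ^ 2) = (Real.sqrt (π / 2) / lam) ^ 2 by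
      rw [div_pow, Real.sq_sqrt (by positivity : (0:ℝ) ≤ π / 2)]; ring]
    rw [← Real.rpow_natCast (Real.sqrt (π / 2) / lam) 2, ← Real.rpow_mul hc,
      show ((2:ℕ):ℝ) * ((3:ℝ)/2) = ((3:ℕ):ℝ) by norm_num, Real.rpow_natCast]
  rw [hpow, show 4 * (2 * lam ^ 2) = 8 * lam ^ 2 by ring]
  ring

end aux

theorem stmt_5 (m lam : ℝ) (hm : 0 < m) (hlam : 0 < lam)
    (x : EuclideanSpace ℝ (Fin 3))
    (D : ℝ)
    (hD : D = ((2 * π) ^ 3)⁻¹ * ∫ p : EuclideanSpace ℝ (Fin 3),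
      Real.exp (-lam ^ 2 * (2 * ‖p‖ ^ 2 + m ^ 2)) * Real.cos (⟪p, x⟫)) :
    HasDerivAt (fun t => DeltaLam m lam t x) D 0 ∧
    D = ((2 * π) ^ 3)⁻¹ * (Real.sqrt (π / 2) / lam) ^ 3 *
        Real.exp (-‖x‖ ^ 2 / (8 * lam ^ 2)) * Real.exp (-lam ^ 2 * m ^ 2) ∧
    D = 2 * Real.sqrt (2 * π) * lam * Real.exp (-lam ^ 2 * m ^ 2) * GaussG (2 * lam) 0 x := by
  have hval := value_part' m lam hm hlam x D hD
  refine ⟨hD ▸ deriv_part' m lam hm hlam x, hval, ?_⟩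
  rw [hval]
  unfold GaussG
  have hS : (0:ℝ) < Real.sqrt (2 * π) := Real.sqrt_pos.2 (by positivity)
  have hS2 : Real.sqrt (2 * π) ^ 2 = 2 * π := Real.sq_sqrt (by positivity)
  have hT : Real.sqrt (π / 2) = π / Real.sqrt (2 * π) := by
    rw [eq_div_iff hS.ne', ← Real.sqrt_mul (by positivity : (0:ℝ) ≤ π / 2),
      show π / 2 * (2 * π) = π ^ 2 by ring, Real.sqrt_sq pi_pos.le]
  have hexp : Real.exp (-(0 ^ 2 + ‖x‖ ^ 2) / (2 * (2 * lam) ^ 2)) =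
      Real.exp (-‖x‖ ^ 2 / (8 * lam ^ 2)) := by congr 1; ring
  rw [hexp, hT]
  have hπ : (0:ℝ) < π := pi_pos
  field_simp
end

section
/- For every T ≥ 0 one has ∫_0^T dt / ((T − t + 1)^{3/2} (t + 1)^{3/2}) = 4T / (√(1+T) (2+T)²), and this quantity is bounded above by 4/(T+1)^{3/2}. -/
open Real MeasureTheory

theorem stmt_17 (T : ℝ) (hT : 0 ≤ T) :
    (∫ t in (0 : ℝ)..T, 1 / ((T - t + 1) ^ ((3 : ℝ) / 2) * (t + 1) ^ ((3 : ℝ) / 2)))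
      = 4 * T / (Real.sqrt (1 + T) * (2 + T) ^ 2) ∧
    4 * T / (Real.sqrt (1 + T) * (2 + T) ^ 2) ≤ 4 / (T + 1) ^ ((3 : ℝ) / 2) := by
  have h32 : ∀ x : ℝ, 0 < x → x ^ ((3:ℝ)/2) = x * Real.sqrt x := by
    intro x hx
    rw [show (3:ℝ)/2 = 1 + 1/2 by norm_num, Real.rpow_add hx, Real.rpow_one,
      ← Real.sqrt_eq_rpow]
  have hT2 : (0:ℝ) < (2 + T)^2 := by positivity
  constructor
  · set F : ℝ → ℝ := fun t => 2/(2+T)^2 * ((2*t - T) / Real.sqrt ((T - t + 1) * (t + 1))) with hF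
    have hderiv : ∀ t ∈ Set.uIcc (0:ℝ) T,
        HasDerivAt F (1 / ((T - t + 1) ^ ((3:ℝ)/2) * (t + 1) ^ ((3:ℝ)/2))) t := by
      intro t ht
      rw [Set.uIcc_of_le hT] at ht
      obtain ⟨ht0, htT⟩ := ht
      have ha : (0:ℝ) < T - t + 1 := by linarith
      have hb : (0:ℝ) < t + 1 := by linarith
      have hg : (0:ℝ) < (T - t + 1) * (t + 1) := by positivity
      have hs : (0:ℝ) < Real.sqrt ((T - t + 1) * (t + 1)) := Real.sqrt_pos.mpr hg
      have hgd : HasDerivAt (fun t => (T - t + 1) * (t + 1)) (T - 2*t) t := by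
        have : HasDerivAt (fun t : ℝ => (T - t + 1) * (t + 1))
            ((-1) * (t + 1) + (T - t + 1) * 1) t := by
          exact (((hasDerivAt_id t).const_sub T).add_const 1).mul
            ((hasDerivAt_id t).add_const 1)
        convert this using 1; ring
      have hsd : HasDerivAt (fun t => Real.sqrt ((T - t + 1) * (t + 1)))
          ((T - 2*t) / (2 * Real.sqrt ((T - t + 1) * (t + 1)))) t := by
        have h := (Real.hasDerivAt_sqrt hg.ne').comp t hgd
        refine h.congr_deriv (Eq.symm ?_)
        ring
      have hnd : HasDerivAt (fun t : ℝ => 2*t - T) 2 t := by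
        simpa using ((hasDerivAt_id t).const_mul 2).sub_const T
      have hdiv := (hnd.div hsd hs.ne')
      have := hdiv.const_mul (2/(2+T)^2)
      refine this.congr_deriv (Eq.symm ?_)
      have hsa : Real.sqrt (T - t + 1) > 0 := Real.sqrt_pos.mpr ha
      have hsb : Real.sqrt (t + 1) > 0 := Real.sqrt_pos.mpr hb
      rw [h32 _ ha, h32 _ hb, Real.sqrt_mul ha.le]
      have ea : Real.sqrt (T - t + 1) ^ 2 = T - t + 1 := Real.sq_sqrt ha.le
      have eb : Real.sqrt (t + 1) ^ 2 = t + 1 := Real.sq_sqrt hb.le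
      field_simp
      linear_combination ((2*t-T)^2*(Real.sqrt (t+1))^2) * ea
        + ((2*t-T)^2*(T-t+1)) * eb
    have hint : IntervalIntegrable
        (fun t => 1 / ((T - t + 1) ^ ((3:ℝ)/2) * (t + 1) ^ ((3:ℝ)/2)))
        volume 0 T := by
      apply ContinuousOn.intervalIntegrable
      intro t ht
      rw [Set.uIcc_of_le hT] at ht
      obtain ⟨ht0, htT⟩ := ht
      have ha : (0:ℝ) < T - t + 1 := by linarith
      have hb : (0:ℝ) < t + 1 := by linarith
      apply ContinuousWithinAt.div continuousWithinAt_const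
      · exact (((continuousWithinAt_const.sub continuousWithinAt_id).add
          continuousWithinAt_const).rpow_const (Or.inl ha.ne')).mul
          ((continuousWithinAt_id.add continuousWithinAt_const).rpow_const (Or.inl hb.ne'))
      · positivity
    rw [intervalIntegral.integral_eq_sub_of_hasDerivAt hderiv hint]
    have hs1 : Real.sqrt ((T - T + 1) * (T + 1)) = Real.sqrt (1 + T) := by
      rw [show (T - T + 1) * (T + 1) = 1 + T by ring]
    have hs2 : Real.sqrt ((T - 0 + 1) * (0 + 1)) = Real.sqrt (1 + T) := by
      rw [show (T - 0 + 1) * (0 + 1) = 1 + T by ring]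
    have hsp : (0:ℝ) < Real.sqrt (1 + T) := Real.sqrt_pos.mpr (by linarith)
    simp only [hF, hs1, hs2]
    field_simp
    ring
  · have h1T : (0:ℝ) < 1 + T := by linarith
    have hsp : (0:ℝ) < Real.sqrt (1 + T) := Real.sqrt_pos.mpr h1T
    rw [h32 _ (by linarith : (0:ℝ) < T + 1), show T + 1 = 1 + T by ring]
    rw [div_le_div_iff₀ (by positivity) (by positivity)]
    have key : 4*T*(1+T) ≤ 4*(2+T)^2 := by nlinarith
    nlinarith [mul_le_mul_of_nonneg_right key hsp.le]
end

section
/- Let m > 0, let n ≥ 1, and let T be a tree (a connected acyclic simple graph) on the vertex set {0, 1, …, n}. Fix 𝐱₀ ∈ ℝ³. Then the function (𝐱₁, …, 𝐱ₙ) ↦ ∏_{{i,j} ∈ E(T)} e^{−m|𝐱ᵢ − 𝐱ⱼ|} is integrable on (ℝ³)ⁿ and ∫_{(ℝ³)ⁿ} ∏_{{i,j} ∈ E(T)} e^{−m|𝐱ᵢ − 𝐱ⱼ|} d𝐱₁ ⋯ d𝐱ₙ = (8π/m³)ⁿ, independently of 𝐱₀. -/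
open Real MeasureTheory
open scoped BigOperators

/-- The symmetric weight e^{−m|Xᵢ − Xⱼ|} attached to an (unordered) edge {i,j}. -/
noncomputable def edgeWeight {V : Type*} (m : ℝ) (X : V → EuclideanSpace ℝ (Fin 3)) :
    Sym2 V → ℝ :=
  Sym2.lift ⟨fun i j => Real.exp (-m * ‖X i - X j‖),
    fun i j => by simp only []; rw [norm_sub_rev]⟩

/-! ### The one-edge integral -/

lemma oneEdge_integrable (m : ℝ) (hm : 0 < m) :
    Integrable (fun x : EuclideanSpace ℝ (Fin 3) => Real.exp (-m * ‖x‖)) := by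
  have hfr : (Module.finrank ℝ (EuclideanSpace ℝ (Fin 3)) : ℝ) < 4 := by
    rw [finrank_euclideanSpace_fin]; norm_num
  have base := integrable_one_add_norm (E := EuclideanSpace ℝ (Fin 3)) (μ := volume) hfr
  set K : ℝ := max 1 (4 / m) with hK
  have hK1 : (1:ℝ) ≤ K := le_max_left _ _
  have hKm : 4 / m ≤ K := le_max_right _ _
  refine (base.const_mul (K ^ 4)).mono' ?_ ?_
  · exact (Real.continuous_exp.comp ((continuous_const.mul continuous_norm))).aestronglyMeasurable
  · filter_upwards with x
    have hr : (0:ℝ) ≤ ‖x‖ := norm_nonneg x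
    set r : ℝ := ‖x‖
    have h1 : 1 + r ≤ K * (1 + m * r / 4) := by
      have h0 : 4 / m * (m * r / 4) = r := by field_simp
      nlinarith [mul_le_mul_of_nonneg_right hKm (by positivity : (0:ℝ) ≤ m * r / 4)]
    have h2 : 1 + m * r / 4 ≤ Real.exp (m * r / 4) := by
      have := Real.add_one_le_exp (m * r / 4); linarith
    have h3 : (1 + r) ^ (4:ℕ) ≤ K ^ 4 * Real.exp (m * r) := by
      calc (1 + r) ^ (4:ℕ) ≤ (K * Real.exp (m * r / 4)) ^ (4:ℕ) := by
            apply pow_le_pow_left₀ (by positivity)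
            exact h1.trans (by nlinarith [Real.exp_pos (m*r/4)])
        _ = K ^ 4 * Real.exp (m * r / 4) ^ (4:ℕ) := by ring
        _ = K ^ 4 * Real.exp (m * r) := by
            rw [← Real.exp_nat_mul]; ring_nf
    have hpos : (0:ℝ) < 1 + r := by linarith
    rw [Real.norm_eq_abs, abs_of_pos (Real.exp_pos _)]
    rw [Real.rpow_neg hpos.le, show ((4:ℝ)) = ((4:ℕ):ℝ) by norm_num, Real.rpow_natCast]
    rw [← div_eq_mul_inv, le_div_iff₀ (by positivity)]
    have h4 : Real.exp (-m * r) * Real.exp (m * r) = 1 := by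
      rw [← Real.exp_add]; ring_nf; exact Real.exp_zero
    calc Real.exp (-m * r) * (1 + r) ^ 4
        ≤ Real.exp (-m * r) * (K ^ 4 * Real.exp (m * r)) :=
          mul_le_mul_of_nonneg_left h3 (Real.exp_pos _).le
      _ = K ^ 4 * (Real.exp (-m * r) * Real.exp (m * r)) := by ring
      _ = K ^ 4 := by rw [h4, mul_one]

lemma gamma_52 : Real.Gamma (3 / 2 + 1) = 3 / 4 * Real.sqrt π := by
  rw [Real.Gamma_add_one (by norm_num)]
  have h32 : (3:ℝ)/2 = 1/2 + 1 := by norm_num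
  rw [h32, Real.Gamma_add_one (by norm_num), Real.Gamma_one_half_eq]
  ring

lemma ball3_vol : ((volume (Metric.ball (0:EuclideanSpace ℝ (Fin 3)) 1)).toReal) = 4 / 3 * π := by
  rw [EuclideanSpace.volume_ball]
  rw [Fintype.card_fin]
  simp only [ENNReal.ofReal_one, one_pow, one_mul]
  rw [ENNReal.toReal_ofReal (by positivity)]
  push_cast
  rw [gamma_52]
  have h1 : Real.sqrt π ^ 3 = π * Real.sqrt π := by
    rw [pow_succ, sq_sqrt Real.pi_pos.le]
  rw [h1]
  have h2 : Real.sqrt π ≠ 0 := by positivity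
  field_simp

lemma radial_int (m : ℝ) (hm : 0 < m) :
    ∫ y in Set.Ioi (0:ℝ), y ^ (2:ℕ) * Real.exp (-m * y) = 2 / m ^ 3 := by
  have key := Real.integral_rpow_mul_exp_neg_mul_Ioi (a := 3) (r := m) (by norm_num) hm
  have congr1 : ∫ t in Set.Ioi (0:ℝ), t ^ ((3:ℝ) - 1) * Real.exp (-(m * t))
      = ∫ y in Set.Ioi (0:ℝ), y ^ (2:ℕ) * Real.exp (-m * y) := by
    apply setIntegral_congr_fun measurableSet_Ioi
    intro t ht
    show t ^ ((3:ℝ) - 1) * Real.exp (-(m * t)) = t ^ (2:ℕ) * Real.exp (-m * t)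
    have h2 : ((3:ℝ) - 1) = ((2:ℕ):ℝ) := by norm_num
    rw [h2, Real.rpow_natCast]
    ring_nf
  rw [← congr1, key]
  have : ((1:ℝ)/m) ^ ((3:ℝ)) = 1 / m ^ 3 := by
    rw [show ((3:ℝ)) = ((3:ℕ):ℝ) by norm_num, Real.rpow_natCast]
    rw [div_pow, one_pow]
  rw [this]
  have h3 : Real.Gamma 3 = 2 := by
    have : (3:ℝ) = ((2:ℕ):ℝ) + 1 := by norm_num
    rw [this, Real.Gamma_nat_eq_factorial]
    norm_num
  rw [h3]; ring

lemma oneEdge_integral (m : ℝ) (hm : 0 < m) :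
    ∫ x : EuclideanSpace ℝ (Fin 3), Real.exp (-m * ‖x‖) = 8 * π / m ^ 3 := by
  have key := MeasureTheory.integral_fun_norm_addHaar
    (volume : Measure (EuclideanSpace ℝ (Fin 3))) (fun r : ℝ => Real.exp (-m * r))
  rw [finrank_euclideanSpace_fin] at key
  rw [key, measureReal_def, ball3_vol]
  simp only [smul_eq_mul, nsmul_eq_mul]
  have h5 : ∫ y in Set.Ioi (0:ℝ), y ^ (3-1 : ℕ) * Real.exp (-m * y) = 2 / m ^ 3 :=
    radial_int m hm
  rw [show (3-1 : ℕ) = 2 from rfl] at h5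
  rw [h5]
  field_simp
  ring

/-! ### Tree combinatorics: parent and depth functions -/

variable {n : ℕ} {T : SimpleGraph (Fin (n+1))}

noncomputable def pth (hT : T.IsTree) (v : Fin (n+1)) : T.Walk v 0 :=
  (hT.existsUnique_path v 0).choose

lemma pth_isPath (hT : T.IsTree) (v : Fin (n+1)) : (pth hT v).IsPath :=
  (hT.existsUnique_path v 0).choose_spec.1

lemma pth_unique (hT : T.IsTree) {v : Fin (n+1)} (q : T.Walk v 0) (hq : q.IsPath) :
    q = pth hT v :=
  (hT.existsUnique_path v 0).choose_spec.2 q hq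

noncomputable def par (hT : T.IsTree) (v : Fin (n+1)) : Fin (n+1) :=
  (pth hT v).getVert 1

noncomputable def dep (hT : T.IsTree) (v : Fin (n+1)) : ℕ := (pth hT v).length

lemma pth_zero (hT : T.IsTree) : pth hT 0 = SimpleGraph.Walk.nil :=
  (pth_unique hT SimpleGraph.Walk.nil SimpleGraph.Walk.IsPath.nil).symm

lemma dep_eq_zero_iff (hT : T.IsTree) (v : Fin (n+1)) : dep hT v = 0 ↔ v = 0 := by
  constructor
  · exact fun h => SimpleGraph.Walk.eq_of_length_eq_zero h
  · rintro rfl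
    rw [dep, pth_zero]
    rfl

lemma cons_structure (hT : T.IsTree) {v : Fin (n+1)} (hv : v ≠ 0) :
    ∃ (h : T.Adj v (par hT v)) (q : T.Walk (par hT v) 0),
      pth hT v = SimpleGraph.Walk.cons h q := by
  have hnn : ¬ (pth hT v).Nil := by
    rw [SimpleGraph.Walk.nil_iff_length_eq]
    exact fun h => hv (SimpleGraph.Walk.eq_of_length_eq_zero h)
  obtain ⟨u, h, q, hq⟩ := SimpleGraph.Walk.not_nil_iff.mp hnn
  have hu : u = par hT v := by
    rw [par, hq, SimpleGraph.Walk.getVert_cons_succ, SimpleGraph.Walk.getVert_zero]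
  subst hu
  exact ⟨h, q, hq⟩

lemma adj_par (hT : T.IsTree) {v : Fin (n+1)} (hv : v ≠ 0) : T.Adj v (par hT v) :=
  (cons_structure hT hv).choose

lemma dep_par (hT : T.IsTree) {v : Fin (n+1)} (hv : v ≠ 0) :
    dep hT (par hT v) + 1 = dep hT v := by
  obtain ⟨h, q, hq⟩ := cons_structure hT hv
  have hqp : q.IsPath := by
    have := pth_isPath hT v
    rw [hq] at this
    exact this.of_cons
  have hqe : q = pth hT (par hT v) := pth_unique hT q hqp
  rw [dep, dep, ← hqe, hq]
  simp [SimpleGraph.Walk.length_cons]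

lemma dep_le (hT : T.IsTree) (v : Fin (n+1)) : dep hT v ≤ n := by
  have := (pth_isPath hT v).length_lt
  rw [Fintype.card_fin] at this
  show (pth hT v).length ≤ n
  omega

lemma par_dichotomy (hT : T.IsTree) {a b : Fin (n+1)} (hab : T.Adj a b) :
    (a ≠ 0 ∧ par hT a = b) ∨ (b ≠ 0 ∧ par hT b = a) := by
  by_cases hmem : a ∈ (pth hT b).support
  · right
    have hb : b ≠ 0 := by
      rintro rfl
      rw [pth_zero] at hmem
      simp only [SimpleGraph.Walk.support_nil, List.mem_singleton] at hmem
      exact hab.ne hmem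
    refine ⟨hb, ?_⟩
    have htu : ((pth hT b).takeUntil a hmem).IsPath := (pth_isPath hT b).takeUntil hmem
    have hsingle : ((pth hT b).takeUntil a hmem)
        = (SimpleGraph.Path.singleton hab.symm : T.Walk b a) := by
      have := hT.IsAcyclic.path_unique ⟨_, htu⟩ (SimpleGraph.Path.singleton hab.symm)
      exact congrArg Subtype.val this
    have hspec := (pth hT b).take_spec hmem
    rw [par]
    conv_lhs => rw [← hspec, hsingle]
    simp [SimpleGraph.Path.singleton, SimpleGraph.Walk.cons_append,
      SimpleGraph.Walk.getVert_cons_succ, SimpleGraph.Walk.getVert_zero]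
  · left
    have ha0 : a ≠ 0 := fun h => hmem (h ▸ (pth hT b).end_mem_support)
    have hpath : (SimpleGraph.Walk.cons hab (pth hT b)).IsPath :=
      (pth_isPath hT b).cons hmem
    have hpe := pth_unique hT _ hpath
    refine ⟨ha0, ?_⟩
    rw [par, ← hpe]
    simp [SimpleGraph.Walk.getVert_cons_succ, SimpleGraph.Walk.getVert_zero]

lemma prod_edges (hT : T.IsTree) [DecidableRel T.Adj] (f : Sym2 (Fin (n+1)) → ℝ) :
    ∏ e ∈ T.edgeFinset, f e = ∏ i : Fin n, f s(i.succ, par hT i.succ) := by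
  symm
  refine Finset.prod_bij (fun a _ => s(a.succ, par hT a.succ)) ?_ ?_ ?_ ?_
  · intro a _
    rw [SimpleGraph.mem_edgeFinset, SimpleGraph.mem_edgeSet]
    exact adj_par hT (Fin.succ_ne_zero a)
  · intro a _ b _ hab
    rw [Sym2.eq_iff] at hab
    rcases hab with ⟨h1, _⟩ | ⟨h1, h2⟩
    · exact Fin.succ_injective _ h1
    · exfalso
      have da := dep_par hT (Fin.succ_ne_zero a)
      have db := dep_par hT (Fin.succ_ne_zero b)
      rw [h2] at da
      rw [← h1] at db
      omega
  · intro e he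
    induction e with
    | _ a b =>
      rw [SimpleGraph.mem_edgeFinset, SimpleGraph.mem_edgeSet] at he
      rcases par_dichotomy hT he with ⟨ha, hpa⟩ | ⟨hb, hpb⟩
      · refine ⟨(a.pred ha), Finset.mem_univ _, ?_⟩
        show s((a.pred ha).succ, par hT (a.pred ha).succ) = s(a, b)
        rw [Fin.succ_pred, hpa]
      · refine ⟨(b.pred hb), Finset.mem_univ _, ?_⟩
        show s((b.pred hb).succ, par hT (b.pred hb).succ) = s(a, b)
        rw [Fin.succ_pred, hpb, Sym2.eq_swap]
  · intro a _
    rfl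

/-! ### The linear change of variables -/

noncomputable def NL (hT : T.IsTree) :
    (Fin n → EuclideanSpace ℝ (Fin 3)) →ₗ[ℝ] (Fin n → EuclideanSpace ℝ (Fin 3)) where
  toFun y := fun i => (Fin.cons 0 y : Fin (n+1) → EuclideanSpace ℝ (Fin 3)) (par hT i.succ)
  map_add' y z := by
    funext i
    simp only [Pi.add_apply]
    induction par hT i.succ using Fin.cases with
    | zero => simp
    | succ j => simp
  map_smul' c y := by
    funext i
    simp only [Pi.smul_apply, RingHom.id_apply]
    induction par hT i.succ using Fin.cases with
    | zero => simp
    | succ j => simp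

lemma NL_pow_eq_zero (hT : T.IsTree) :
    ∀ (k : ℕ) (i : Fin n), dep hT i.succ ≤ k →
      ∀ y : Fin n → EuclideanSpace ℝ (Fin 3), ((NL hT ^ k) y) i = 0 := by
  intro k
  induction k with
  | zero =>
    intro i hle y
    exact absurd ((dep_eq_zero_iff hT _).mp (Nat.le_zero.mp hle)) (Fin.succ_ne_zero i)
  | succ k ih =>
    intro i hle y
    rw [pow_succ']
    rw [Module.End.mul_apply]
    show (Fin.cons 0 ((NL hT ^ k) y) : Fin (n+1) → EuclideanSpace ℝ (Fin 3)) (par hT i.succ) = 0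
    rcases Fin.eq_zero_or_eq_succ (par hT i.succ) with h | ⟨j, h⟩
    · rw [h, Fin.cons_zero]
    · rw [h, Fin.cons_succ]
      apply ih
      have := dep_par hT (Fin.succ_ne_zero i)
      rw [h] at this
      omega

lemma NL_nilpotent (hT : T.IsTree) : IsNilpotent (NL hT) := by
  refine ⟨n + 1, ?_⟩
  refine LinearMap.ext fun y => funext fun i => ?_
  rw [NL_pow_eq_zero hT (n+1) i (le_trans (dep_le hT _) (Nat.le_succ n)) y]
  rfl

lemma det_one_sub_nilpotent {W : Type*} [AddCommGroup W] [Module ℝ W]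
    [Module.Finite ℝ W] [Module.Free ℝ W] (f : W →ₗ[ℝ] W) (hf : IsNilpotent f) :
    LinearMap.det (1 - f) = 1 := by
  classical
  let b := Module.Free.chooseBasis ℝ W
  set M := LinearMap.toMatrixAlgEquiv b f with hM
  have hMnil : IsNilpotent M := hf.map (LinearMap.toMatrixAlgEquiv b)
  have hchar : M.charpoly = Polynomial.X ^ (Fintype.card (Module.Free.ChooseBasisIndex ℝ W)) := by
    have h1 := (Matrix.isNilpotent_charpoly_sub_pow_of_isNilpotent hMnil).eq_zero
    exact sub_eq_zero.mp h1
  have h1 : LinearMap.det (1 - f) = Matrix.det (1 - M) := by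
    rw [← LinearMap.det_toMatrix b (1 - f)]
    congr 1
    show LinearMap.toMatrixAlgEquiv b (1 - f) = 1 - M
    rw [map_sub, map_one]
  have h2 : Matrix.det (1 - M) = (M.charpoly).eval 1 := by
    rw [Matrix.charpoly, _root_.eval_det, Matrix.matPolyEquiv_charmatrix]
    rw [Polynomial.eval_sub, Polynomial.eval_X, Polynomial.eval_C]
    simp
  rw [h1, h2, hchar]
  simp

lemma cons_split (x0 : EuclideanSpace ℝ (Fin 3)) (y : Fin n → EuclideanSpace ℝ (Fin 3))
    (p : Fin (n+1)) :
    (Fin.cons x0 y : Fin (n+1) → EuclideanSpace ℝ (Fin 3)) p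
      = (Fin.cons 0 y : Fin (n+1) → EuclideanSpace ℝ (Fin 3)) p
        + (Fin.cons x0 (fun _ => 0) : Fin (n+1) → EuclideanSpace ℝ (Fin 3)) p := by
  induction p using Fin.cases with
  | zero => simp
  | succ j => simp

instance piVolumeAddHaar {k : ℕ} :
    (volume : Measure (Fin k → EuclideanSpace ℝ (Fin 3))).IsAddHaarMeasure :=
  Measure.pi.isAddHaarMeasure _

/-! ### Main theorem -/

theorem stmt_18 (m : ℝ) (hm : 0 < m) (n : ℕ) (hn : 1 ≤ n)
    (T : SimpleGraph (Fin (n + 1))) [DecidableRel T.Adj] (hT : T.IsTree)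
    (x0 : EuclideanSpace ℝ (Fin 3)) :
    Integrable (fun y : Fin n → EuclideanSpace ℝ (Fin 3) =>
      ∏ e ∈ T.edgeFinset, edgeWeight m (Fin.cons x0 y) e) ∧
    (∫ y : Fin n → EuclideanSpace ℝ (Fin 3),
      ∏ e ∈ T.edgeFinset, edgeWeight m (Fin.cons x0 y) e) = (8 * π / m ^ 3) ^ n := by
  classical
  set c : Fin n → EuclideanSpace ℝ (Fin 3) :=
    fun i => (Fin.cons x0 (fun _ => 0) : Fin (n+1) → EuclideanSpace ℝ (Fin 3)) (par hT i.succ)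
    with hc
  set Φ : (Fin n → EuclideanSpace ℝ (Fin 3)) → (Fin n → EuclideanSpace ℝ (Fin 3)) :=
    fun y => (1 - NL hT) y - c with hPhi
  set g : (Fin n → EuclideanSpace ℝ (Fin 3)) → ℝ :=
    fun u => ∏ i : Fin n, Real.exp (-m * ‖u i‖) with hg
  -- the integrand is g ∘ Φ
  have hfun : (fun y : Fin n → EuclideanSpace ℝ (Fin 3) =>
      ∏ e ∈ T.edgeFinset, edgeWeight m (Fin.cons x0 y) e) = fun y => g (Φ y) := by
    funext y
    rw [prod_edges hT]
    apply Finset.prod_congr rfl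
    intro i _
    have h1 : edgeWeight m (Fin.cons x0 y) s(i.succ, par hT i.succ)
        = Real.exp (-m * ‖(Fin.cons x0 y : Fin (n+1) → EuclideanSpace ℝ (Fin 3)) i.succ
            - (Fin.cons x0 y : Fin (n+1) → EuclideanSpace ℝ (Fin 3)) (par hT i.succ)‖) := rfl
    rw [h1]
    have hv : (Fin.cons x0 y : Fin (n+1) → EuclideanSpace ℝ (Fin 3)) i.succ
        - (Fin.cons x0 y : Fin (n+1) → EuclideanSpace ℝ (Fin 3)) (par hT i.succ) = Φ y i := by
      have h2 : (Fin.cons x0 y : Fin (n+1) → EuclideanSpace ℝ (Fin 3)) i.succ = y i :=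
        Fin.cons_succ _ _ _
      rw [h2, cons_split x0 y (par hT i.succ)]
      show y i - _ = (1 - NL hT) y i - c i
      rw [LinearMap.sub_apply, Module.End.one_apply]
      show _ = (y i - NL hT y i) - c i
      have h3 : NL hT y i
          = (Fin.cons 0 y : Fin (n+1) → EuclideanSpace ℝ (Fin 3)) (par hT i.succ) := rfl
      rw [h3, hc]
      abel
    rw [hv]
  -- measure preservation
  have hdet : LinearMap.det ((1 : (Fin n → EuclideanSpace ℝ (Fin 3)) →ₗ[ℝ] _) - NL hT) = 1 :=
    det_one_sub_nilpotent _ (NL_nilpotent hT)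
  have hmeas1 : MeasurePreserving (fun y => (1 - NL hT) y)
      (volume : Measure (Fin n → EuclideanSpace ℝ (Fin 3))) volume := by
    refine ⟨(LinearMap.continuous_of_finiteDimensional _).measurable, ?_⟩
    have hmap := Measure.map_linearMap_addHaar_eq_smul_addHaar
      (volume : Measure (Fin n → EuclideanSpace ℝ (Fin 3))) (f := 1 - NL hT)
      (by rw [hdet]; norm_num)
    rw [hdet] at hmap
    simp at hmap; exact hmap
  have hmp : MeasurePreserving Φ
      (volume : Measure (Fin n → EuclideanSpace ℝ (Fin 3))) volume :=
    (measurePreserving_sub_right volume c).comp hmeas1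
  -- integrability of g
  have hg_int : Integrable g := by
    rw [hg]
    exact Integrable.fintype_prod (f := fun (_ : Fin n) (x : EuclideanSpace ℝ (Fin 3)) =>
      Real.exp (-m * ‖x‖)) (fun i => oneEdge_integrable m hm)
  have hg_cont : Continuous g := by
    rw [hg]
    exact continuous_finset_prod Finset.univ (fun i _ =>
      Real.continuous_exp.comp (continuous_const.mul ((continuous_apply i).norm)))
  have hg_meas' : AEStronglyMeasurable g (Measure.map Φ volume) := by
    rw [hmp.map_eq]
    exact hg_cont.aestronglyMeasurable
  constructor
  · rw [hfun]
    have := (integrable_map_measure hg_meas' hmp.measurable.aemeasurable).mp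
      (by rw [hmp.map_eq]; exact hg_int)
    exact this
  · rw [hfun]
    have h4 : ∫ y, g (Φ y) = ∫ u, g u := by
      have := integral_map (φ := Φ) hmp.measurable.aemeasurable hg_meas'
      rw [hmp.map_eq] at this
      exact this.symm
    rw [h4, hg]
    rw [MeasureTheory.integral_fintype_prod_volume_eq_prod (f := fun (_ : Fin n)
      (x : EuclideanSpace ℝ (Fin 3)) => Real.exp (-m * ‖x‖))]
    rw [Finset.prod_const, Finset.card_univ, Fintype.card_fin, oneEdge_integral m hm]
end
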